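/- arXiv:2105.02367 — 2 statements merged into one kernel-verified Lean document; each statement's English description precedes it below -/
import Mathlib

section
/- Let $s, p$ be positive integers with $s \mid p$ and $m \ge 1$. Then the function $\chi(q) = (q - \gcd(q,s))\left((q-1)^{m-1} + p\sum_{k=1}^{m-1}(-1)^k(q-1)^{m-1-k}\right) + (-1)^m p$ is a quasi-polynomial in $q$ with minimum period exactly $s$. -/
open Polynomial


/-- The polynomial part of χ. -/
noncomputable def Apoly (p m : ℕ) : Polynomial ℤ :=
  (X - 1) ^ (m - 1) +
    C (p : ℤ) * ∑ k ∈ Finset.Icc 1 (m - 1), C ((-1 : ℤ) ^ k) * (X - 1) ^ (m - 1 - k)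

lemma Apoly_eval (p m : ℕ) (z : ℤ) :
    (Apoly p m).eval z =
      (z - 1) ^ (m - 1) + (p : ℤ) * ∑ k ∈ Finset.Icc 1 (m - 1), (-1 : ℤ) ^ k * (z - 1) ^ (m - 1 - k) := by
  simp [Apoly, eval_finset_sum]

lemma Apoly_ne_zero {p m : ℕ} (hp : 0 < p) (hm : 1 ≤ m) : Apoly p m ≠ 0 := by
  intro h
  have h1 : (Apoly p m).eval 1 = 0 := by rw [h]; simp
  rw [Apoly_eval] at h1
  rcases eq_or_lt_of_le hm with hm1 | hm2
  · rw [← hm1] at h1; norm_num at h1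
  · have hm1 : 1 ≤ m - 1 := by omega
    rw [Finset.sum_eq_single_of_mem (m - 1) (Finset.mem_Icc.mpr ⟨hm1, le_refl _⟩)
      (fun k hk hkne => by
        have : 0 < m - 1 - k := by
          simp only [Finset.mem_Icc] at hk; omega
        simp [zero_pow this.ne'])] at h1
    simp only [sub_self, Nat.sub_self, pow_zero, mul_one, zero_pow (by omega : m - 1 ≠ 0),
      zero_add] at h1
    have : ((-1 : ℤ) ^ (m - 1)) ≠ 0 := pow_ne_zero _ (by norm_num)
    have hp' : (p : ℤ) ≠ 0 := Int.natCast_ne_zero.mpr hp.ne'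
    exact (mul_ne_zero hp' this) h1

/-- `φ : ℤ_{>0} → ℤ` is a quasi-polynomial with period `ρ`: there are polynomials
`f^1, …, f^ρ` (indexed here by the residue `q % ρ`) with `φ(q) = f^{q mod ρ}(q)`
for all positive `q`. -/
def IsQPPeriod (φ : ℕ → ℤ) (ρ : ℕ) : Prop :=
  0 < ρ ∧ ∃ f : ℕ → Polynomial ℤ, ∀ q : ℕ, 0 < q → φ q = (f (q % ρ)).eval (q : ℤ)

/-- For positive integers `s ∣ p` and `m ≥ 1`, the function
`χ(q) = (q - gcd(q,s)) ((q-1)^{m-1} + p ∑_{k=1}^{m-1} (-1)^k (q-1)^{m-1-k}) + (-1)^m p`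
is a quasi-polynomial in `q` with minimum period exactly `s`. -/
theorem stmt9 (s p m : ℕ) (hs : 0 < s) (hp : 0 < p) (hsp : s ∣ p) (hm : 1 ≤ m) :
    IsQPPeriod
        (fun q : ℕ =>
          ((q : ℤ) - (Nat.gcd q s : ℤ)) *
              (((q : ℤ) - 1) ^ (m - 1) +
                (p : ℤ) *
                  ∑ k ∈ Finset.Icc 1 (m - 1), (-1 : ℤ) ^ k * ((q : ℤ) - 1) ^ (m - 1 - k)) +
            (-1 : ℤ) ^ m * (p : ℤ)) s ∧
      ∀ ρ : ℕ,
        IsQPPeriod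
            (fun q : ℕ =>
              ((q : ℤ) - (Nat.gcd q s : ℤ)) *
                  (((q : ℤ) - 1) ^ (m - 1) +
                    (p : ℤ) *
                      ∑ k ∈ Finset.Icc 1 (m - 1), (-1 : ℤ) ^ k * ((q : ℤ) - 1) ^ (m - 1 - k)) +
                (-1 : ℤ) ^ m * (p : ℤ)) ρ → s ≤ ρ := by
  constructor
  · refine ⟨hs, fun r => (X - C (Nat.gcd r s : ℤ)) * Apoly p m + C ((-1 : ℤ) ^ m * p), ?_⟩
    intro q hq
    have hg : Nat.gcd (q % s) s = Nat.gcd q s := by rw [← Nat.gcd_rec, Nat.gcd_comm]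
    have := Apoly_eval p m (q : ℤ)
    simp only [eval_add, eval_mul, eval_sub, eval_X, eval_C, hg, this]
  · intro ρ hρ
    by_contra hlt
    push_neg at hlt
    obtain ⟨hρ0, f, hf⟩ := hρ
    set d := Nat.gcd ρ s with hd
    have hds : d ∣ s := Nat.gcd_dvd_right ρ s
    have hd0 : 0 < d := Nat.gcd_pos_of_pos_left s hρ0
    have hdlt : d < s := lt_of_le_of_lt (Nat.gcd_le_left s hρ0) hlt
    obtain ⟨q1, hq1ρ, hq1s⟩ := Nat.chineseRemainder'
      (show d ≡ 0 [MOD Nat.gcd ρ s] from (Nat.modEq_zero_iff_dvd).mpr dvd_rfl)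
    -- q1 ≡ d [MOD ρ], q1 ≡ 0 [MOD s]
    have hsq1 : s ∣ q1 := (Nat.modEq_zero_iff_dvd).mp hq1s
    -- key: identify f (q1 % ρ)
    have key : ∀ (q0 c : ℕ), q0 % ρ = q1 % ρ → 0 < q0 →
        (∀ t : ℕ, Nat.gcd (q0 + t * (ρ * s)) s = c) →
        f (q1 % ρ) = (X - C (c : ℤ)) * Apoly p m + C ((-1 : ℤ) ^ m * p) := by
      intro q0 c hmod hq0 hgcd
      have hD : f (q1 % ρ) - ((X - C (c : ℤ)) * Apoly p m + C ((-1 : ℤ) ^ m * p)) = 0 := by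
        apply Polynomial.eq_zero_of_infinite_isRoot
        apply Set.infinite_of_injective_forall_mem
          (f := fun t : ℕ => ((q0 + t * (ρ * s) : ℕ) : ℤ))
        · intro a b hab
          have hρs : 0 < ρ * s := Nat.mul_pos hρ0 hs
          simp only [Nat.cast_inj] at hab
          exact Nat.eq_of_mul_eq_mul_right hρs (Nat.add_left_cancel hab)
        · intro t
          set q : ℕ := q0 + t * (ρ * s) with hq
          have hqpos : 0 < q := by positivity
          have hqmod : q % ρ = q1 % ρ := by
            rw [hq, show t * (ρ * s) = t * s * ρ by ring, Nat.add_mul_mod_self_right, hmod]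
          have heval := hf q hqpos
          rw [hqmod] at heval
          simp only at heval
          simp only [Set.mem_setOf_eq, IsRoot.def, eval_sub, eval_add, eval_mul, eval_X, eval_C]
          rw [← heval, hgcd t, Apoly_eval]
          ring
      have := sub_eq_zero.mp hD
      exact this
    have eq1 : f (q1 % ρ) = (X - C (s : ℤ)) * Apoly p m + C ((-1 : ℤ) ^ m * p) := by
      apply key (q1 + ρ * s) s
      · rw [Nat.add_mul_mod_self_left]
      · have : 0 < ρ * s := Nat.mul_pos hρ0 hs
        omega
      · intro t
        apply Nat.gcd_eq_right
        exact Dvd.dvd.add (Dvd.dvd.add hsq1 ⟨ρ, mul_comm ρ s⟩) ⟨t * ρ, by ring⟩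
    have eq2 : f (q1 % ρ) = (X - C (d : ℤ)) * Apoly p m + C ((-1 : ℤ) ^ m * p) := by
      apply key d d
      · exact hq1ρ.symm
      · exact hd0
      · intro t
        have : (d + t * (ρ * s)) % s = d % s := by
          rw [show t * (ρ * s) = t * ρ * s by ring, Nat.add_mul_mod_self_right]
        rw [Nat.gcd_comm, Nat.gcd_rec, this, ← Nat.gcd_rec, Nat.gcd_comm]
        exact Nat.gcd_eq_left hds
    have hA : ((C (d : ℤ)) - C (s : ℤ)) * Apoly p m = 0 := by
      have := eq1.symm.trans eq2
      have h' : (X - C (s : ℤ)) * Apoly p m = (X - C (d : ℤ)) * Apoly p m := by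
        have := add_right_cancel this
        exact this
      ring_nf
      ring_nf at h'
      linear_combination h'
    rcases mul_eq_zero.mp hA with h | h
    · have : (d : ℤ) = (s : ℤ) := by
        have := sub_eq_zero.mp h
        exact_mod_cast Polynomial.C_injective this
      have : d = s := by exact_mod_cast this
      omega
    · exact Apoly_ne_zero hp hm h
end

section
/- Let $q > p \ge 1$ and $m \ge 1$ be integers. Then $\#\{x \in \{1,\dots,q-1\}^m : x_1 + \cdots + x_m \not\equiv r \pmod q \text{ for all } r \in \{1,\dots,p\}\}$ equals $\frac{(q-p)(q-1)^m + (-1)^m p}{q}$. -/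
open Classical

private def ccount (q : ℕ) [NeZero q] (m : ℕ) (r : ZMod q) : ℕ :=
  (Finset.univ.filter fun y : Fin m → ZMod q => (∀ i, y i ≠ 0) ∧ ∑ i, y i = r).card

private lemma ccount_total (q : ℕ) [NeZero q] (m : ℕ) :
    ∑ r : ZMod q, ccount q m r = (q - 1) ^ m := by
  have h1 : (Finset.univ.filter fun y : Fin m → ZMod q => ∀ i, y i ≠ 0).card
      = ∑ r : ZMod q, ccount q m r := by
    rw [Finset.card_eq_sum_card_fiberwise
      (f := fun y : Fin m → ZMod q => ∑ i, y i)
      (t := (Finset.univ : Finset (ZMod q))) (fun x _ => Finset.mem_univ _)]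
    apply Finset.sum_congr rfl
    intro r _
    unfold ccount
    rw [Finset.filter_filter]
  rw [← h1]
  have h2 : (Finset.univ.filter fun y : Fin m → ZMod q => ∀ i, y i ≠ 0)
      = Fintype.piFinset (fun _ : Fin m => Finset.univ.erase (0 : ZMod q)) := by
    ext y
    simp [Fintype.mem_piFinset]
  rw [h2, Fintype.card_piFinset]
  have h3 : ((Finset.univ : Finset (ZMod q)).erase 0).card = q - 1 := by
    rw [Finset.card_erase_of_mem (Finset.mem_univ _), Finset.card_univ, ZMod.card]
  simp [h3]

private lemma ccount_succ (q : ℕ) [NeZero q] (m : ℕ) (r : ZMod q) :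
    ccount q (m + 1) r + ccount q m r = (q - 1) ^ m := by
  have step1 : ccount q (m + 1) r
      = ∑ s ∈ (Finset.univ.erase (0 : ZMod q)), ccount q m (r - s) := by
    unfold ccount
    rw [Finset.card_eq_sum_card_fiberwise
      (f := fun y : Fin (m+1) → ZMod q => y 0)
      (t := Finset.univ.erase (0 : ZMod q))
      (fun y hy => by
        simp only [Finset.mem_coe, Finset.mem_filter, Finset.mem_univ, true_and] at hy
        exact Finset.mem_erase.mpr ⟨hy.1 0, Finset.mem_univ _⟩)]
    apply Finset.sum_congr rfl
    intro s hs
    have hs0 : s ≠ 0 := (Finset.mem_erase.mp hs).1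
    apply Finset.card_nbij' (i := fun y => Fin.tail y) (j := fun z => Fin.cons s z)
    · intro y hy
      simp only [Finset.mem_coe, Finset.mem_filter, Finset.mem_univ, true_and] at hy ⊢
      obtain ⟨⟨hne, hsum⟩, h0⟩ := hy
      refine ⟨fun i => hne i.succ, ?_⟩
      rw [Fin.sum_univ_succ, h0] at hsum
      exact eq_sub_of_add_eq' hsum
    · intro z hz
      simp only [Finset.mem_coe, Finset.mem_filter, Finset.mem_univ, true_and] at hz ⊢
      obtain ⟨hne, hsum⟩ := hz
      refine ⟨⟨?_, ?_⟩, ?_⟩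
      · intro i
        refine Fin.cases ?_ ?_ i
        · simpa using hs0
        · intro j; simpa using hne j
      · rw [Fin.sum_univ_succ]
        simp [hsum]
      · simp
    · intro y hy
      simp only [Finset.mem_coe, Finset.mem_filter, Finset.mem_univ, true_and] at hy
      rw [← hy.2]
      exact Fin.cons_self_tail y
    · intro z _
      simp
  have step2 : ∑ s ∈ (Finset.univ.erase (0 : ZMod q)), ccount q m (r - s)
      = ∑ t ∈ (Finset.univ.erase r), ccount q m t := by
    apply Finset.sum_nbij' (i := fun s => r - s) (j := fun t => r - t)
    · intro a ha
      simp only [Finset.mem_erase, Finset.mem_univ, and_true] at ha ⊢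
      intro h
      exact ha (sub_eq_self.mp h)
    · intro a ha
      simp only [Finset.mem_erase, Finset.mem_univ, and_true] at ha ⊢
      intro h
      apply ha
      linear_combination -h
    · intro a _; ring
    · intro a _; ring
    · intro a _; rfl
  rw [step1, step2, Finset.sum_erase_add _ _ (Finset.mem_univ r), ccount_total]

private lemma ccount_val (q : ℕ) [NeZero q] (hq : 1 ≤ q) (m : ℕ) (r : ZMod q) (hr : r ≠ 0) :
    (ccount q m r : ℤ) * q = ((q : ℤ) - 1) ^ m - (-1) ^ m := by
  induction m with
  | zero =>
    have h0 : ccount q 0 r = 0 := by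
      unfold ccount
      apply Finset.card_eq_zero.mpr
      apply Finset.filter_false_of_mem
      intro y _
      simp only [Finset.univ_eq_empty, Finset.sum_empty]
      rintro ⟨-, h⟩
      exact hr h.symm
    simp [h0]
  | succ n ih =>
    have h := ccount_succ q n r
    have hz : (ccount q (n + 1) r : ℤ) + (ccount q n r : ℤ) = ((q - 1 : ℕ) : ℤ) ^ n := by
      exact_mod_cast h
    rw [Nat.cast_sub hq] at hz
    push_cast at hz
    have h' : (ccount q (n + 1) r : ℤ) = ((q : ℤ) - 1) ^ n - ccount q n r := by linarith
    rw [h', sub_mul, ih]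
    ring

private lemma card_filter_irrel {α : Type*} (s : Finset α) (P : α → Prop)
    {i1 i2 : DecidablePred P} :
    (@Finset.filter α P i1 s).card = (@Finset.filter α P i2 s).card :=
  congrArg (fun i => (@Finset.filter α P i s).card) (Subsingleton.elim i1 i2)

/-- For integers `q > p ≥ 1` and `m ≥ 1`, the number of `x ∈ {1, …, q-1}^m` with
`x₁ + ⋯ + x_m ≢ r (mod q)` for all `r ∈ {1, …, p}` equals
`((q - p)(q - 1)^m + (-1)^m p) / q`. -/
theorem stmt19 (p q m : ℕ) (hp : 1 ≤ p) (hq : p < q) (hm : 1 ≤ m) :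
    (((Fintype.piFinset fun _ : Fin m => Finset.Icc 1 (q - 1)).filter fun x : Fin m → ℕ =>
          ∀ r ∈ Finset.Icc 1 p, ¬ (∑ i, x i) ≡ r [MOD q]).card : ℤ) =
      (((q : ℤ) - (p : ℤ)) * ((q : ℤ) - 1) ^ m + (-1 : ℤ) ^ m * (p : ℤ)) / (q : ℤ) := by
  have hq2 : 2 ≤ q := by omega
  haveI : NeZero q := ⟨by omega⟩
  set T := Fintype.piFinset fun _ : Fin m => Finset.Icc 1 (q - 1) with hT
  clear_value T
  -- total card
  have hTcard : T.card = (q - 1) ^ m := by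
    rw [hT, Fintype.card_piFinset]
    simp [Nat.card_Icc]
  -- split into good and bad
  have hsplit : (T.filter fun x : Fin m → ℕ =>
        ∀ r ∈ Finset.Icc 1 p, ¬ (∑ i, x i) ≡ r [MOD q]).card
      + (T.filter fun x : Fin m → ℕ =>
        ¬ ∀ r ∈ Finset.Icc 1 p, ¬ (∑ i, x i) ≡ r [MOD q]).card = T.card := by
    rw [card_filter_irrel T (fun x : Fin m → ℕ =>
          ∀ r ∈ Finset.Icc 1 p, ¬ (∑ i, x i) ≡ r [MOD q])
        (i2 := fun _ => Classical.propDecidable _),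
      card_filter_irrel T (fun x : Fin m → ℕ =>
          ¬ ∀ r ∈ Finset.Icc 1 p, ¬ (∑ i, x i) ≡ r [MOD q])
        (i2 := fun _ => Classical.propDecidable _)]
    exact @Finset.card_filter_add_card_filter_not (Fin m → ℕ) T
      (fun x : Fin m → ℕ => ∀ r ∈ Finset.Icc 1 p, ¬ (∑ i, x i) ≡ r [MOD q])
      (fun _ => Classical.propDecidable _) (fun _ => Classical.propDecidable _)
  -- fiberwise count of complement
  have hcomp : (T.filter fun x : Fin m → ℕ =>
        ¬ ∀ r ∈ Finset.Icc 1 p, ¬ (∑ i, x i) ≡ r [MOD q]).card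
      = ∑ r ∈ Finset.Icc 1 p, ccount q m ((r : ℕ) : ZMod q) := by
    rw [Finset.card_eq_sum_card_fiberwise (f := fun x : Fin m → ℕ => (∑ i, x i) % q)
      (t := Finset.Icc 1 p)
      (fun x hx => by
        simp only [Finset.mem_coe, Finset.mem_filter] at hx
        obtain ⟨-, hnp⟩ := hx
        push_neg at hnp
        obtain ⟨r, hr, hmod⟩ := hnp
        obtain ⟨hr1, hr2⟩ := Finset.mem_Icc.mp hr
        unfold Nat.ModEq at hmod
        rw [Nat.mod_eq_of_lt (show r < q by clear * - hr1 hr2 hq; omega)] at hmod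
        simp only [hmod]
        exact Finset.mem_Icc.mpr ⟨hr1, hr2⟩)]
    apply Finset.sum_congr rfl
    intro r hr
    obtain ⟨hr1, hr2⟩ := Finset.mem_Icc.mp hr
    -- fiber = T.filter (sum % q = r)
    have hfib : ((T.filter fun x : Fin m → ℕ =>
          ¬ ∀ r ∈ Finset.Icc 1 p, ¬ (∑ i, x i) ≡ r [MOD q]).filter
            fun x => (∑ i, x i) % q = r)
        = T.filter fun x => (∑ i, x i) % q = r := by
      ext x
      simp only [Finset.mem_filter]
      constructor
      · rintro ⟨⟨hx, -⟩, h⟩; exact ⟨hx, h⟩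
      · rintro ⟨hx, h⟩
        refine ⟨⟨hx, ?_⟩, h⟩
        intro hall
        refine hall r hr ?_
        unfold Nat.ModEq
        rw [h, Nat.mod_eq_of_lt (show r < q by clear * - hr1 hr2 hq; omega)]
    rw [hfib]
    -- bijection to ZMod q count
    unfold ccount
    apply Finset.card_nbij' (i := fun x i => ((x i : ℕ) : ZMod q))
      (j := fun y i => (y i).val)
    · intro x hx
      simp only [Finset.mem_coe, Finset.mem_filter, hT, Fintype.mem_piFinset, Finset.mem_Icc,
        Finset.mem_univ, true_and] at hx ⊢
      obtain ⟨hmem, hsum⟩ := hx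
      constructor
      · intro i h
        have hd := (ZMod.natCast_eq_zero_iff _ _).mp h
        have h1 := (hmem i).1
        have h2 := (hmem i).2
        have hlt : x i < q := by clear * - h1 h2 hq2; omega
        have := Nat.eq_zero_of_dvd_of_lt hd hlt
        clear * - h1 h2 hq2 this; omega
      · rw [← Nat.cast_sum, ← ZMod.natCast_mod, hsum]
    · intro y hy
      simp only [Finset.mem_coe, Finset.mem_filter, hT, Fintype.mem_piFinset, Finset.mem_Icc,
        Finset.mem_univ, true_and] at hy ⊢
      obtain ⟨hne, hsum⟩ := hy
      constructor
      · intro i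
        have h1 : (y i).val < q := ZMod.val_lt _
        have h2 : (y i).val ≠ 0 := fun h => hne i ((ZMod.val_eq_zero _).mp h)
        clear * - h1 h2; omega
      · have hcast : ((∑ i, (y i).val : ℕ) : ZMod q) = ((r : ℕ) : ZMod q) := by
          push_cast
          simp only [ZMod.natCast_val, ZMod.cast_id]
          rw [hsum]
        have hmeq := (ZMod.natCast_eq_natCast_iff _ _ _).mp hcast
        unfold Nat.ModEq at hmeq
        rw [hmeq, Nat.mod_eq_of_lt (show r < q by clear * - hr1 hr2 hq; omega)]
    · intro x hx
      simp only [Finset.mem_coe, Finset.mem_filter, hT, Fintype.mem_piFinset, Finset.mem_Icc] at hx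
      funext i
      have hlt : x i < q := by have h2 := (hx.1 i).2; clear * - h2 hq2; omega
      exact ZMod.val_cast_of_lt hlt
    · intro y _
      funext i
      simp [ZMod.natCast_val, ZMod.cast_id]
  -- each ccount value
  have hcc : ∀ r ∈ Finset.Icc 1 p,
      (ccount q m ((r : ℕ) : ZMod q) : ℤ) * q = ((q : ℤ) - 1) ^ m - (-1) ^ m := by
    intro r hr
    obtain ⟨hr1, hr2⟩ := Finset.mem_Icc.mp hr
    apply ccount_val q (by clear * - hq2; omega)
    intro h
    have hd := (ZMod.natCast_eq_zero_iff _ _).mp h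
    have := Nat.eq_zero_of_dvd_of_lt hd (by clear * - hr1 hr2 hq; omega)
    clear * - this hr1; omega
  -- assemble
  rw [hcomp, hTcard] at hsplit
  have hz : (((T.filter fun x : Fin m → ℕ =>
        ∀ r ∈ Finset.Icc 1 p, ¬ (∑ i, x i) ≡ r [MOD q]).card : ℤ))
      + ∑ r ∈ Finset.Icc 1 p, (ccount q m ((r : ℕ) : ZMod q) : ℤ)
      = ((q - 1 : ℕ) : ℤ) ^ m := by
    exact_mod_cast congrArg (Nat.cast : ℕ → ℤ) hsplit
  rw [Nat.cast_sub (by clear * - hq2; omega : 1 ≤ q)] at hz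
  push_cast at hz
  have h2 : (∑ r ∈ Finset.Icc 1 p, (ccount q m ((r : ℕ) : ZMod q) : ℤ)) * q
      = (p : ℤ) * (((q : ℤ) - 1) ^ m - (-1) ^ m) := by
    rw [Finset.sum_mul, Finset.sum_congr rfl hcc, Finset.sum_const, Nat.card_Icc,
      nsmul_eq_mul]
    push_cast [Nat.add_sub_cancel]
    ring
  have key : (((T.filter fun x : Fin m → ℕ =>
        ∀ r ∈ Finset.Icc 1 p, ¬ (∑ i, x i) ≡ r [MOD q]).card : ℤ)) * q
      = ((q : ℤ) - (p : ℤ)) * ((q : ℤ) - 1) ^ m + (-1 : ℤ) ^ m * (p : ℤ) := by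
    have h3 : (((T.filter fun x : Fin m → ℕ =>
          ∀ r ∈ Finset.Icc 1 p, ¬ (∑ i, x i) ≡ r [MOD q]).card : ℤ))
        = ((q : ℤ) - 1) ^ m
          - ∑ r ∈ Finset.Icc 1 p, (ccount q m ((r : ℕ) : ZMod q) : ℤ) := by
      linarith
    rw [h3, sub_mul]
    linear_combination -h2
  rw [← key, Int.mul_ediv_cancel _ (by exact_mod_cast (by clear * - hq2; omega : q ≠ 0))]
end
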